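/- Let k ∈ ℝ, d ∈ ℝ, a = (0, d, 0) ∈ ℝ³, let σ : ℝ³ → ℝ³ be the reflection σ(y₁, y₂, y₃) = (y₁, −y₂, y₃) across the plane {x₂ = 0}, and let p, q ∈ ℝ³ and M ∈ ℕ with p + i·a ≠ σ(q + j·a) for all i, j ∈ Fin M. Then the mirror-image kernel matrix Ĥ indexed by Fin M with entries Ĥ i j = G(p + i·a, σ(q + j·a)) is Hankel: Ĥ i j = Ĥ i' j' whenever (i : ℕ) + j = (i' : ℕ) + j'. -/

import Mathlib

/-- The free-space Helmholtz Green's function on ℝ³: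
`G(x, y) = exp(i k ‖x − y‖) / (4π ‖x − y‖)`, meaningful for `x ≠ y`. -/
noncomputable def helmholtzG (k : ℝ) (x y : EuclideanSpace ℝ (Fin 3)) : ℂ :=
  Complex.exp (Complex.I * (k : ℂ) * (‖x - y‖ : ℂ)) /
    (4 * (Real.pi : ℂ) * (‖x - y‖ : ℂ))

/-- Reflection `σ(y₁, y₂, y₃) = (y₁, −y₂, y₃)` across the plane `{x₂ = 0}`. -/
noncomputable def mirrorY (y : EuclideanSpace ℝ (Fin 3)) : EuclideanSpace ℝ (Fin 3) :=
  WithLp.toLp 2 (fun i : Fin 3 => if i = 1 then -(y i) else y i)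

/-- The translation vector `a = (0, d, 0)`. -/
noncomputable def transY (d : ℝ) : EuclideanSpace ℝ (Fin 3) :=
  WithLp.toLp 2 (fun i : Fin 3 => if i = 1 then d else 0)

/-- The mirror-image kernel matrix `Ĥ i j = G(p + i·a, σ(q + j·a))` for a
periodicity direction `a = (0, d, 0)` perpendicular to the symmetry plane
`{x₂ = 0}` is a Hankel matrix: its entries depend only on `i + j`. -/
theorem mirror_kernel_matrix_hankel (k d : ℝ) (p q : EuclideanSpace ℝ (Fin 3))
    (M : ℕ)
    (hsep : ∀ i j : Fin M,
      p + (i : ℕ) • transY d ≠ mirrorY (q + (j : ℕ) • transY d))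
    (H : Matrix (Fin M) (Fin M) ℂ)
    (hH : ∀ i j : Fin M,
      H i j = helmholtzG k (p + (i : ℕ) • transY d) (mirrorY (q + (j : ℕ) • transY d))) :
    ∀ i j i' j' : Fin M, (i : ℕ) + (j : ℕ) = (i' : ℕ) + (j' : ℕ) → H i j = H i' j' := by
  have key : ∀ i j : ℕ, (p + i • transY d) - mirrorY (q + j • transY d) =
      (WithLp.toLp 2 (fun m => if m = 1 then p m + q m + (i + j : ℕ) * d else p m - q m) :
        EuclideanSpace ℝ (Fin 3)) := by
    intro i j
    ext m
    simp only [PiLp.sub_apply, PiLp.add_apply, PiLp.smul_apply, mirrorY, transY,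
      PiLp.toLp_apply, smul_eq_mul, Nat.cast_add]
    split <;> ring
  intro i j i' j' h
  rw [hH i j, hH i' j', helmholtzG, helmholtzG, key, key, h]
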